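/- Let K be a probability density on ℝ^d with ∫ y K(y) dy = 0 and second-moment matrix m₂(K) I_d, and let f : ℝ^d → ℝ be C² with bounded uniformly continuous Hessian. Then for fixed y and symmetric positive definite bandwidth matrices H → 0, ∫ K(w) f(y − H^{1/2} w) dw − f(y) = (1/2) m₂(K) tr(H · Hess f(y)) + o(tr H). -/

import Mathlib

open MeasureTheory Matrix Filter Asymptotics
open scoped Topology BigOperators
set_option maxHeartbeats 1000000

/-- The Hessian matrix of `f : ℝ^d → ℝ` at `y`, with entries the second partial
derivatives `∂ᵢ∂ⱼ f(y)`. -/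
noncomputable def hessianMatrix {d : ℕ} (f : (Fin d → ℝ) → ℝ) (y : Fin d → ℝ) :
    Matrix (Fin d) (Fin d) ℝ :=
  Matrix.of fun i j =>
    fderiv ℝ (fun x => fderiv ℝ f x (Pi.single j 1)) y (Pi.single i 1)

namespace KernelBias
open Set
variable {d : ℕ} {f : (Fin d → ℝ) → ℝ}

lemma clm_apply_eq_sum (L : (Fin d → ℝ) →L[ℝ] ℝ) (v : Fin d → ℝ) :
    L v = ∑ j, v j * L (Pi.single j 1) := by
  have hv : v = ∑ j, v j • (Pi.single j 1 : Fin d → ℝ) := by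
    ext k
    simp [Pi.single_apply, Finset.sum_apply, Finset.sum_ite_eq]
  conv_lhs => rw [hv]
  rw [map_sum]
  simp [smul_eq_mul]

lemma fderiv_fderiv_apply (hf : ContDiff ℝ 2 f) (x v : Fin d → ℝ) :
    fderiv ℝ (fun z => fderiv ℝ f z v) x = (fderiv ℝ (fderiv ℝ f) x).flip v := by
  have hDF : ContDiff ℝ 1 (fderiv ℝ f) := hf.fderiv_right (by norm_num)
  rw [fderiv_clm_apply ((hDF.differentiable (by norm_num)) x) (differentiableAt_const v)]
  simp

lemma hessian_eq_fderiv2 (hf : ContDiff ℝ 2 f) (x : Fin d → ℝ) (i j : Fin d) :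
    hessianMatrix f x i j
      = fderiv ℝ (fderiv ℝ f) x (Pi.single i 1) (Pi.single j 1) := by
  show fderiv ℝ (fun z => fderiv ℝ f z (Pi.single j 1)) x (Pi.single i 1) = _
  rw [fderiv_fderiv_apply hf]
  rfl

lemma hessian_fderiv (hf : ContDiff ℝ 2 f) (x v u : Fin d → ℝ) :
    fderiv ℝ (fun z => fderiv ℝ f z v) x u
      = ∑ i, ∑ j, u i * v j * hessianMatrix f x i j := by
  rw [fderiv_fderiv_apply hf]
  have h1 : (fderiv ℝ (fderiv ℝ f) x).flip v u = fderiv ℝ (fderiv ℝ f) x u v := rfl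
  rw [h1, clm_apply_eq_sum (fderiv ℝ (fderiv ℝ f) x u) v]
  have h2 : ∀ j, fderiv ℝ (fderiv ℝ f) x u (Pi.single j 1)
      = ∑ i, u i * fderiv ℝ (fderiv ℝ f) x (Pi.single i 1) (Pi.single j 1) :=
    fun j => clm_apply_eq_sum ((fderiv ℝ (fderiv ℝ f) x).flip (Pi.single j 1)) u
  simp_rw [h2, hessian_eq_fderiv2 hf, Finset.mul_sum]
  rw [Finset.sum_comm]
  exact Finset.sum_congr rfl fun i _ => Finset.sum_congr rfl fun j _ => by ring

lemma hessian_symm (hf : ContDiff ℝ 2 f) (x : Fin d → ℝ) (i j : Fin d) :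
    hessianMatrix f x i j = hessianMatrix f x j i := by
  have h := (hf.contDiffAt (x := x)).isSymmSndFDerivAt (n := 2) (by norm_num)
  rw [hessian_eq_fderiv2 hf, hessian_eq_fderiv2 hf]
  exact h _ _


lemma taylor_sq (hf : ContDiff ℝ 2 f) (y v : Fin d → ℝ) :
    ∃ c ∈ Set.Ioo (0:ℝ) 1,
      f (y + v) = f y + fderiv ℝ f y v
        + (1/2) * ∑ i, ∑ j, v i * v j * hessianMatrix f (y + c • v) i j := by
  set l : ℝ → (Fin d → ℝ) := fun t => y + t • v with hl
  have hline : ∀ t : ℝ, HasDerivAt l v t := by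
    intro t
    have h1 : HasDerivAt (fun t : ℝ => t • v) ((1:ℝ) • v) t :=
      (hasDerivAt_id t).smul_const v
    simpa only [one_smul] using h1.const_add y
  have hfd : Differentiable ℝ f := hf.differentiable (by norm_num)
  set g : ℝ → ℝ := fun t => f (l t) with hg
  have hgC : ContDiff ℝ 2 g := by
    apply hf.comp
    exact contDiff_const.add (contDiff_id.smul contDiff_const)
  have hg1 : ∀ t, HasDerivAt g (fderiv ℝ f (l t) v) t := fun t =>
    ((hfd (l t)).hasFDerivAt).comp_hasDerivAt t (hline t)
  have hderiv : deriv g = fun t => fderiv ℝ f (l t) v := funext fun t => (hg1 t).deriv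
  have hDF : Differentiable ℝ (fderiv ℝ f) :=
    (hf.fderiv_right (n := 2) (m := 1) (by norm_num)).differentiable (by norm_num)
  have hg2 : ∀ t, HasDerivAt (deriv g)
      (∑ i, ∑ j, v i * v j * hessianMatrix f (l t) i j) t := by
    intro t
    rw [hderiv]
    have h3 : HasDerivAt (fun t => fderiv ℝ f (l t) v)
        (fderiv ℝ (fun z => fderiv ℝ f z v) (l t) v) t :=
      (((hDF (l t)).clm_apply (differentiableAt_const v)).hasFDerivAt).comp_hasDerivAt
        t (hline t)
    rwa [hessian_fderiv hf] at h3
  have hIcc : UniqueDiffOn ℝ (Icc (0:ℝ) 1) := uniqueDiffOn_Icc one_pos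
  -- iteratedDerivWithin 1 g equals deriv g on Ioo 0 1
  have h1eq : ∀ x ∈ Ioo (0:ℝ) 1, iteratedDerivWithin 1 g (Icc 0 1) x = deriv g x := by
    intro x hx
    have hmem : Icc (0:ℝ) 1 ∈ 𝓝 x := Icc_mem_nhds hx.1 hx.2
    rw [iteratedDerivWithin_one,
      derivWithin_of_mem_nhds hmem]
  have hf' : DifferentiableOn ℝ (iteratedDerivWithin 1 g (Icc 0 1)) (Ioo 0 1) := by
    apply DifferentiableOn.congr (f := deriv g)
    · exact fun x _ => ((hg2 x).differentiableAt).differentiableWithinAt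
    · exact h1eq
  obtain ⟨c, hc, hT⟩ := taylor_mean_remainder_lagrange (f := g) (x₀ := 0) (x := 1) (n := 1)
    (by norm_num) (hgC.contDiffOn.of_le (by norm_num))
    (by rw [uIcc_of_le zero_le_one, uIoo_of_le zero_le_one]; exact hf')
  rw [uIoo_of_le zero_le_one] at hc
  rw [uIcc_of_le zero_le_one] at hT
  refine ⟨c, hc, ?_⟩
  have htay : taylorWithinEval g 1 (Icc (0:ℝ) 1) 0 1 = g 0 + deriv g 0 := by
    rw [taylorWithinEval_succ, taylor_within_zero_eval]
    have : iteratedDerivWithin 1 g (Icc (0:ℝ) 1) 0 = deriv g 0 := by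
      rw [iteratedDerivWithin_one]
      exact ((hg1 0).differentiableAt).derivWithin (hIcc 0 (by norm_num))
    simp [this]
  have h2eq : iteratedDerivWithin 2 g (Icc (0:ℝ) 1) c
      = ∑ i, ∑ j, v i * v j * hessianMatrix f (l c) i j := by
    have hcIcc : c ∈ Icc (0:ℝ) 1 := Ioo_subset_Icc_self hc
    have hmem : Icc (0:ℝ) 1 ∈ 𝓝 c := Icc_mem_nhds hc.1 hc.2
    rw [show (2:ℕ) = 1 + 1 from rfl, iteratedDerivWithin_succ,
      derivWithin_of_mem_nhds hmem]
    have hev : iteratedDerivWithin 1 g (Icc (0:ℝ) 1) =ᶠ[𝓝 c] deriv g := by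
      filter_upwards [Ioo_mem_nhds hc.1 hc.2] with x hx using h1eq x hx
    rw [hev.deriv_eq]
    exact (hg2 c).deriv
  have hg1val : g 1 = f (y + v) := by simp [hg, hl]
  have hg0val : g 0 = f y := by simp [hg, hl]
  have hd0 : deriv g 0 = fderiv ℝ f y v := by
    rw [hderiv]; simp [hl]
  rw [htay, h2eq, hg1val, hg0val, hd0] at hT
  simp only [hl] at hT
  norm_num [Nat.factorial] at hT
  linarith [hT]

lemma quad_form_nonneg {A : Matrix (Fin d) (Fin d) ℝ} (hA : A.PosSemidef)
    (x : Fin d → ℝ) : 0 ≤ ∑ i, x i * ∑ j, A i j * x j := by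
  simpa [dotProduct, Matrix.mulVec, star_trivial] using hA.dotProduct_mulVec_nonneg x

lemma psd_symm {A : Matrix (Fin d) (Fin d) ℝ} (hA : A.PosSemidef) (k j : Fin d) :
    A j k = A k j := by
  simpa using hA.1.apply k j

lemma psd_diag_nonneg {A : Matrix (Fin d) (Fin d) ℝ} (hA : A.PosSemidef) (k : Fin d) :
    0 ≤ A k k := by
  have h := quad_form_nonneg hA (Pi.single k 1)
  simpa [Pi.single_apply, Finset.sum_ite_eq', Finset.mul_sum, mul_ite] using h

lemma psd_trace_nonneg {A : Matrix (Fin d) (Fin d) ℝ} (hA : A.PosSemidef) :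
    0 ≤ A.trace :=
  Finset.sum_nonneg fun i _ => psd_diag_nonneg hA i

lemma psd_diag_le_trace {A : Matrix (Fin d) (Fin d) ℝ} (hA : A.PosSemidef) (k : Fin d) :
    A k k ≤ A.trace :=
  Finset.single_le_sum (fun i _ => psd_diag_nonneg hA i) (Finset.mem_univ k)

lemma psd_entry_le_trace {A : Matrix (Fin d) (Fin d) ℝ} (hA : A.PosSemidef) (k j : Fin d) :
    |A k j| ≤ A.trace := by
  rcases eq_or_ne k j with rfl | hkj
  · rw [abs_of_nonneg (psd_diag_nonneg hA k)]
    exact psd_diag_le_trace hA k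
  · have hsym := psd_symm hA k j
    have hq : ∀ b : ℝ, 0 ≤ A k k + b * A k j + b * A j k + b * b * A j j := by
      intro b
      have h := quad_form_nonneg hA (Pi.single k 1 + Pi.single j b)
      simp only [Pi.add_apply, Pi.single_apply, mul_add, add_mul, Finset.sum_add_distrib,
        ite_mul, mul_ite, one_mul, zero_mul, mul_zero, mul_one, Finset.sum_ite_eq',
        Finset.mem_univ, if_true] at h
      ring_nf at h ⊢
      linarith [h]
    have h1 := hq 1
    have h2 := hq (-1)
    have hkk := psd_diag_le_trace hA k
    have hjj := psd_diag_le_trace hA j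
    have hkk0 := psd_diag_nonneg hA k
    have hjj0 := psd_diag_nonneg hA j
    rw [abs_le]
    constructor <;> nlinarith [psd_trace_nonneg hA]

lemma psd_trace_sq_le {A : Matrix (Fin d) (Fin d) ℝ} (hA : A.PosSemidef) :
    A.trace ^ 2 ≤ (d : ℝ) * (A * A).trace := by
  have h1 : A.trace ^ 2 ≤ (d : ℝ) * ∑ i, A i i ^ 2 := by
    have := sq_sum_le_card_mul_sum_sq (s := Finset.univ) (f := fun i : Fin d => A i i)
    simpa [Matrix.trace, Matrix.diag] using this
  refine h1.trans (mul_le_mul_of_nonneg_left ?_ (Nat.cast_nonneg d))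
  rw [Matrix.trace]
  apply Finset.sum_le_sum
  intro i _
  have : (A * A).diag i = ∑ j, A i j * A j i := by
    simp [Matrix.diag, Matrix.mul_apply]
  rw [this]
  have hle : A i i ^ 2 ≤ ∑ j, A i j * A j i := by
    have hterm : ∀ j : Fin d, 0 ≤ A i j * A j i := by
      intro j
      rw [psd_symm hA i j]
      exact mul_self_nonneg _
    have := Finset.single_le_sum (fun j _ => hterm j) (Finset.mem_univ i)
    nlinarith [this]
  exact hle

lemma mulVec_norm_le {A : Matrix (Fin d) (Fin d) ℝ} (hA : A.PosSemidef)
    (w : Fin d → ℝ) : ‖A *ᵥ w‖ ≤ (d : ℝ) * A.trace * ‖w‖ := by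
  have htr := psd_trace_nonneg hA
  rw [pi_norm_le_iff_of_nonneg (by positivity)]
  intro k
  rw [Real.norm_eq_abs]
  have : (A *ᵥ w) k = ∑ j, A k j * w j := rfl
  rw [this]
  calc |∑ j, A k j * w j| ≤ ∑ j, |A k j * w j| := Finset.abs_sum_le_sum_abs _ _
    _ ≤ ∑ _j : Fin d, A.trace * ‖w‖ := by
        apply Finset.sum_le_sum
        intro j _
        rw [abs_mul]
        have hwj : |w j| ≤ ‖w‖ := by
          rw [← Real.norm_eq_abs]; exact norm_le_pi_norm w j
        exact mul_le_mul (psd_entry_le_trace hA k j) hwj (abs_nonneg _) htr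
    _ = (d : ℝ) * A.trace * ‖w‖ := by
        simp [Finset.sum_const, nsmul_eq_mul]; ring


lemma remainder_bound (hf : ContDiff ℝ 2 f) (y v : Fin d → ℝ) {M : ℝ}
    (hM : ∀ z : Fin d → ℝ, dist z y ≤ ‖v‖ → ∀ i j,
      |hessianMatrix f z i j - hessianMatrix f y i j| ≤ M) :
    |f (y + v) - f y - fderiv ℝ f y v
      - (1/2) * ∑ i, ∑ j, v i * v j * hessianMatrix f y i j|
      ≤ (1/2) * (d:ℝ)^2 * M * ‖v‖^2 := by
  obtain ⟨c, hc, hT⟩ := taylor_sq hf y v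
  have hdist : dist (y + c • v) y ≤ ‖v‖ := by
    rw [dist_eq_norm]
    have : y + c • v - y = c • v := by abel
    rw [this, norm_smul]
    calc ‖c‖ * ‖v‖ ≤ 1 * ‖v‖ := by
          apply mul_le_mul_of_nonneg_right _ (norm_nonneg v)
          rw [Real.norm_eq_abs, abs_of_pos hc.1]
          exact hc.2.le
      _ = ‖v‖ := one_mul _
  have key : f (y + v) - f y - fderiv ℝ f y v
      - (1/2) * ∑ i, ∑ j, v i * v j * hessianMatrix f y i j
      = (1/2) * ∑ i, ∑ j, v i * v j *
          (hessianMatrix f (y + c • v) i j - hessianMatrix f y i j) := by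
    rw [hT]
    have : ∀ (B B' : Matrix (Fin d) (Fin d) ℝ),
        (∑ i, ∑ j, v i * v j * (B i j - B' i j))
        = (∑ i, ∑ j, v i * v j * B i j) - (∑ i, ∑ j, v i * v j * B' i j) := by
      intro B B'
      rw [← Finset.sum_sub_distrib]
      refine Finset.sum_congr rfl fun i _ => ?_
      rw [← Finset.sum_sub_distrib]
      exact Finset.sum_congr rfl fun j _ => by ring
    rw [this]
    ring
  rw [key]
  rw [abs_mul, abs_of_pos (by norm_num : (0:ℝ) < 1/2)]
  have hsum : |∑ i, ∑ j, v i * v j *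
      (hessianMatrix f (y + c • v) i j - hessianMatrix f y i j)|
      ≤ (d:ℝ)^2 * M * ‖v‖^2 := by
    calc |∑ i, ∑ j, v i * v j *
        (hessianMatrix f (y + c • v) i j - hessianMatrix f y i j)|
        ≤ ∑ i, |∑ j, v i * v j *
          (hessianMatrix f (y + c • v) i j - hessianMatrix f y i j)| :=
          Finset.abs_sum_le_sum_abs _ _
      _ ≤ ∑ _i : Fin d, ∑ _j : Fin d, ‖v‖ * ‖v‖ * M := by
          apply Finset.sum_le_sum
          intro i _
          calc |∑ j, v i * v j *
              (hessianMatrix f (y + c • v) i j - hessianMatrix f y i j)|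
              ≤ ∑ j, |v i * v j *
                (hessianMatrix f (y + c • v) i j - hessianMatrix f y i j)| :=
                Finset.abs_sum_le_sum_abs _ _
            _ ≤ ∑ _j : Fin d, ‖v‖ * ‖v‖ * M := by
                apply Finset.sum_le_sum
                intro j _
                rw [abs_mul, abs_mul]
                have hvi : |v i| ≤ ‖v‖ := by
                  rw [← Real.norm_eq_abs]; exact norm_le_pi_norm v i
                have hvj : |v j| ≤ ‖v‖ := by
                  rw [← Real.norm_eq_abs]; exact norm_le_pi_norm v j
                have hM' := hM _ hdist i j
                have h0 : (0:ℝ) ≤ M := le_trans (abs_nonneg _) hM'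
                have := mul_le_mul (mul_le_mul hvi hvj (abs_nonneg _) (norm_nonneg v))
                  hM' (abs_nonneg _) (by positivity)
                linarith [this]
      _ = (d:ℝ)^2 * M * ‖v‖^2 := by
          simp [Finset.sum_const, nsmul_eq_mul]
          ring
  calc (1/2) * |∑ i, ∑ j, v i * v j *
      (hessianMatrix f (y + c • v) i j - hessianMatrix f y i j)|
      ≤ (1/2) * ((d:ℝ)^2 * M * ‖v‖^2) := by linarith [hsum]
    _ = (1/2) * (d:ℝ)^2 * M * ‖v‖^2 := by ring


end KernelBias

open KernelBias

/-- Multivariate bias expansion for the kernel smoother: if `K` is a probability density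
on `ℝ^d` with mean zero and second-moment matrix `m₂(K) I_d`, and `f` is `C²` with
bounded uniformly continuous Hessian, then for fixed `y`, as symmetric positive definite
bandwidth matrices `H → 0` (with `H^{1/2}` a positive semidefinite square root of `H`),
`∫ K(w) f(y − H^{1/2} w) dw − f(y) = (1/2) m₂(K) tr(H · Hess f(y)) + o(tr H)`. -/
theorem multivariate_kernel_bias_expansion
    (d : ℕ) (K : (Fin d → ℝ) → ℝ) (hK_nonneg : ∀ w, 0 ≤ K w)
    (hK_int : Integrable K) (hK_prob : ∫ w, K w = 1)
    (hK_mean_int : ∀ i : Fin d, Integrable fun w : Fin d → ℝ => w i * K w)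
    (hK_mean : ∀ i : Fin d, (∫ w : Fin d → ℝ, w i * K w) = 0)
    (m₂ : ℝ)
    (hK_mom_int : ∀ i j : Fin d, Integrable fun w : Fin d → ℝ => w i * w j * K w)
    (hK_mom : ∀ i j : Fin d,
      (∫ w : Fin d → ℝ, w i * w j * K w) = if i = j then m₂ else 0)
    (f : (Fin d → ℝ) → ℝ) (hf : ContDiff ℝ 2 f)
    (hhess_bdd : ∃ C, ∀ y i j, |hessianMatrix f y i j| ≤ C)
    (hhess_uc : ∀ i j : Fin d, UniformContinuous fun y => hessianMatrix f y i j)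
    (sq : Matrix (Fin d) (Fin d) ℝ → Matrix (Fin d) (Fin d) ℝ)
    (hsq : ∀ H : Matrix (Fin d) (Fin d) ℝ, H.PosDef →
      (sq H).PosSemidef ∧ sq H * sq H = H)
    (y : Fin d → ℝ) :
    (fun H : Matrix (Fin d) (Fin d) ℝ =>
        (∫ w : Fin d → ℝ, K w * f (y - (sq H).mulVec w)) - f y -
          (1 / 2) * m₂ * (H * hessianMatrix f y).trace)
      =o[𝓝[{H : Matrix (Fin d) (Fin d) ℝ | H.PosDef}] 0]
        fun H : Matrix (Fin d) (Fin d) ℝ => H.trace := by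
  classical
  obtain ⟨C₀, hC₀⟩ := hhess_bdd
  set C := max C₀ 0 with hCdef
  have hC : ∀ z i j, |hessianMatrix f z i j| ≤ C :=
    fun z i j => (hC₀ z i j).trans (le_max_left _ _)
  have hCnn : (0:ℝ) ≤ C := le_max_right _ _
  set g : (Fin d → ℝ) → ℝ := fun w => (∑ i, w i ^ 2) * K w with hgdef
  have hg_int : Integrable g := by
    have hgeq : g = fun w => ∑ i, w i * w i * K w := by
      funext w
      show (∑ i, w i ^ 2) * K w = ∑ i, w i * w i * K w
      rw [Finset.sum_mul]
      exact Finset.sum_congr rfl fun i _ => by ring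
    rw [hgeq]
    exact integrable_finset_sum _ fun i _ => hK_mom_int i i
  have hg_nonneg : ∀ w, 0 ≤ g w := fun w =>
    mul_nonneg (Finset.sum_nonneg fun i _ => sq_nonneg _) (hK_nonneg w)
  set M₂ := ∫ w, g w with hM₂def
  have hM₂nn : 0 ≤ M₂ := integral_nonneg hg_nonneg
  -- tail integrals
  have hSmeas : ∀ r : ℝ, MeasurableSet {w : Fin d → ℝ | r < ‖w‖} :=
    fun r => measurableSet_lt measurable_const continuous_norm.measurable
  have htail : Tendsto (fun n : ℕ => ∫ w in {w : Fin d → ℝ | (n:ℝ) < ‖w‖}, g w)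
      atTop (𝓝 0) := by
    set B : ℕ → Set (Fin d → ℝ) := fun n => {w | ‖w‖ ≤ (n:ℝ)} with hBdef
    have hBmeas : ∀ n, MeasurableSet (B n) :=
      fun n => measurableSet_le continuous_norm.measurable measurable_const
    have hBmono : Monotone B := by
      intro m n hmn w hw
      simp only [hBdef, Set.mem_setOf_eq] at hw ⊢
      exact le_trans hw (Nat.cast_le.2 hmn)
    have hBunion : (⋃ n, B n) = Set.univ := by
      apply Set.eq_univ_of_forall
      intro w
      refine Set.mem_iUnion.2 ⟨⌈‖w‖⌉₊, ?_⟩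
      simp only [hBdef, Set.mem_setOf_eq]
      exact Nat.le_ceil _
    have h1 : Tendsto (fun n => ∫ w in B n, g w) atTop (𝓝 (∫ w in ⋃ n, B n, g w)) :=
      tendsto_setIntegral_of_monotone hBmeas hBmono
        (by rw [hBunion]; exact hg_int.integrableOn)
    rw [hBunion, setIntegral_univ] at h1
    have h2 : ∀ n : ℕ, ∫ w in {w : Fin d → ℝ | (n:ℝ) < ‖w‖}, g w
        = (∫ w, g w) - ∫ w in B n, g w := by
      intro n
      have hcomp : {w : Fin d → ℝ | (n:ℝ) < ‖w‖} = (B n)ᶜ := by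
        ext w; simp [hBdef, not_le]
      have := integral_add_compl (hBmeas n) hg_int (f := g)
      rw [hcomp]
      linarith [this]
    have h3 : Tendsto (fun n : ℕ => (∫ w, g w) - ∫ w in B n, g w) atTop
        (𝓝 ((∫ w, g w) - ∫ w, g w)) := tendsto_const_nhds.sub h1
    rw [sub_self] at h3
    exact h3.congr fun n => (h2 n).symm
  rw [Asymptotics.isLittleO_iff]
  intro c hc
  set ε := c / ((d:ℝ)^5 * (M₂ + 1) + 1) with hεdef
  have hε : 0 < ε := div_pos hc (by positivity)
  obtain ⟨δ, hδpos, hδ⟩ : ∃ δ > 0, ∀ a b : Fin d → ℝ, dist a b ≤ δ → ∀ i j,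
      |hessianMatrix f a i j - hessianMatrix f b i j| ≤ ε := by
    have h := fun (p : Fin d × Fin d) =>
      Metric.uniformContinuous_iff.1 (hhess_uc p.1 p.2) ε hε
    choose δ' hδ'pos hδ' using h
    rcases isEmpty_or_nonempty (Fin d × Fin d) with he | hne
    · exact ⟨1, one_pos, fun a b _ i j => (he.elim ⟨i, j⟩)⟩
    · have hinfpos : 0 < Finset.univ.inf' Finset.univ_nonempty δ' :=
        (Finset.lt_inf'_iff _).2 fun p _ => hδ'pos p
      refine ⟨(Finset.univ.inf' Finset.univ_nonempty δ') / 2, by linarith, ?_⟩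
      intro a b hab i j
      have h2 : Finset.univ.inf' Finset.univ_nonempty δ' ≤ δ' (i, j) :=
        Finset.inf'_le _ (Finset.mem_univ _)
      have h1 : dist a b < δ' (i, j) := lt_of_le_of_lt hab (by linarith)
      have := hδ' (i, j) h1
      rw [Real.dist_eq] at this
      exact this.le
  obtain ⟨N, hN⟩ : ∃ N : ℕ,
      ((d:ℝ)^5 * C) * (∫ w in {w : Fin d → ℝ | (N:ℝ) < ‖w‖}, g w) ≤ c / 2 := by
    have hpos : (0:ℝ) < c / (2 * ((d:ℝ)^5 * C + 1)) := by positivity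
    obtain ⟨N, hN⟩ := (htail.eventually_lt_const hpos).exists
    refine ⟨N, ?_⟩
    have hTnn : 0 ≤ ∫ w in {w : Fin d → ℝ | (N:ℝ) < ‖w‖}, g w :=
      setIntegral_nonneg (hSmeas _) fun w _ => hg_nonneg w
    have hd5C : (0:ℝ) ≤ (d:ℝ)^5 * C := by positivity
    have h2 : ((d:ℝ)^5 * C) * (∫ w in {w : Fin d → ℝ | (N:ℝ) < ‖w‖}, g w)
        ≤ ((d:ℝ)^5 * C + 1) * (c / (2 * ((d:ℝ)^5 * C + 1))) := by
      apply mul_le_mul (by linarith) hN.le hTnn (by linarith)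
    have h3 : ((d:ℝ)^5 * C + 1) * (c / (2 * ((d:ℝ)^5 * C + 1))) = c / 2 := by
      field_simp
    linarith
  set T := ∫ w in {w : Fin d → ℝ | (N:ℝ) < ‖w‖}, g w with hTdef
  have hTnn : 0 ≤ T := setIntegral_nonneg (hSmeas _) fun w _ => hg_nonneg w
  set β := δ^2 / ((d:ℝ)^3 * (N:ℝ)^2 + 1) with hβdef
  have hβpos : 0 < β := by positivity
  have hev : ∀ᶠ H in 𝓝[{H : Matrix (Fin d) (Fin d) ℝ | H.PosDef}]
      (0 : Matrix (Fin d) (Fin d) ℝ), H.trace < β := by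
    have hcont : Continuous fun H : Matrix (Fin d) (Fin d) ℝ => H.trace :=
      continuous_id.matrix_trace
    have h1 : Tendsto (fun H : Matrix (Fin d) (Fin d) ℝ => H.trace)
        (𝓝[{H : Matrix (Fin d) (Fin d) ℝ | H.PosDef}] 0) (𝓝 0) := by
      have h2 := hcont.tendsto 0
      rw [Matrix.trace_zero] at h2
      exact h2.mono_left nhdsWithin_le_nhds
    exact h1.eventually_lt_const hβpos
  filter_upwards [hev, self_mem_nhdsWithin] with H htrβ hHPD
  obtain ⟨hA, hAA⟩ := hsq H hHPD
  set A := sq H with hAdef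
  have htrH0 : 0 ≤ H.trace := psd_trace_nonneg hHPD.posSemidef
  have htrA := psd_trace_nonneg hA
  set Hm := hessianMatrix f y with hHmdef
  set F := fderiv ℝ f y with hFdef
  set Q : (Fin d → ℝ) → ℝ := fun u => ∑ i, ∑ j, u i * u j * Hm i j with hQdef
  set ρ : (Fin d → ℝ) → ℝ := fun w =>
    f (y - A *ᵥ w) - f y + F (A *ᵥ w) - (1/2) * Q (A *ᵥ w) with hρdef
  have hρ_eq : ∀ w, ρ w = f (y + (-(A *ᵥ w))) - f y - F (-(A *ᵥ w))
      - (1/2) * ∑ i, ∑ j, (-(A *ᵥ w)) i * (-(A *ᵥ w)) j * Hm i j := by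
    intro w
    have h1 : y + (-(A *ᵥ w)) = y - A *ᵥ w := (sub_eq_add_neg y (A *ᵥ w)).symm
    have h2 : F (-(A *ᵥ w)) = - F (A *ᵥ w) := map_neg F _
    have h3 : (∑ i, ∑ j, (-(A *ᵥ w)) i * (-(A *ᵥ w)) j * Hm i j) = Q (A *ᵥ w) := by
      show _ = ∑ i, ∑ j, (A *ᵥ w) i * (A *ᵥ w) j * Hm i j
      refine Finset.sum_congr rfl fun i _ => Finset.sum_congr rfl fun j _ => ?_
      simp only [Pi.neg_apply]
      ring
    rw [h1, h2, h3]
    simp only [hρdef]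
    ring
  have habs2C : ∀ (z : Fin d → ℝ) i j,
      |hessianMatrix f z i j - hessianMatrix f y i j| ≤ 2 * C := by
    intro z i j
    have h1 := abs_le.1 (hC z i j)
    have h2 := abs_le.1 (hC y i j)
    rw [abs_le]
    constructor <;> linarith
  have hρ_glob : ∀ w, |ρ w| ≤ (d:ℝ)^2 * C * ‖A *ᵥ w‖^2 := by
    intro w
    rw [hρ_eq w]
    have hb := remainder_bound hf y (-(A *ᵥ w)) (M := 2*C)
      (fun z _ i j => habs2C z i j)
    exact hb.trans_eq (by rw [norm_neg]; ring)
  have hρ_loc : ∀ w, ‖A *ᵥ w‖ ≤ δ → |ρ w| ≤ (1/2) * (d:ℝ)^2 * ε * ‖A *ᵥ w‖^2 := by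
    intro w hwδ
    rw [hρ_eq w]
    have hb := remainder_bound hf y (-(A *ᵥ w)) (M := ε) ?_
    · exact hb.trans_eq (by rw [norm_neg])
    · intro z hz i j
      rw [norm_neg] at hz
      exact hδ z y (hz.trans hwδ) i j
  have hv_sq : ∀ w, ‖A *ᵥ w‖^2 ≤ (d:ℝ)^3 * H.trace * (∑ i, w i ^ 2) := by
    intro w
    have h1 : ‖A *ᵥ w‖ ≤ (d:ℝ) * A.trace * ‖w‖ := mulVec_norm_le hA w
    have h2 : A.trace^2 ≤ (d:ℝ) * H.trace := by
      have := psd_trace_sq_le hA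
      rwa [hAA] at this
    have h4 : ‖w‖^2 ≤ ∑ i, w i ^ 2 := by
      have hS : (0:ℝ) ≤ ∑ i, w i ^ 2 := Finset.sum_nonneg fun i _ => sq_nonneg _
      have h5 : ‖w‖ ≤ Real.sqrt (∑ i, w i ^ 2) := by
        rw [pi_norm_le_iff_of_nonneg (Real.sqrt_nonneg _)]
        intro i
        rw [Real.norm_eq_abs, ← Real.sqrt_sq_eq_abs]
        exact Real.sqrt_le_sqrt
          (Finset.single_le_sum (fun i _ => sq_nonneg (w i)) (Finset.mem_univ i))
      calc ‖w‖^2 ≤ (Real.sqrt (∑ i, w i ^ 2))^2 := pow_le_pow_left₀ (norm_nonneg w) h5 2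
        _ = ∑ i, w i ^ 2 := Real.sq_sqrt hS
    calc ‖A *ᵥ w‖^2 ≤ ((d:ℝ) * A.trace * ‖w‖)^2 := pow_le_pow_left₀ (norm_nonneg _) h1 2
      _ = (d:ℝ)^2 * A.trace^2 * ‖w‖^2 := by ring
      _ ≤ (d:ℝ)^2 * ((d:ℝ) * H.trace) * (∑ i, w i ^ 2) := by
          apply mul_le_mul (mul_le_mul_of_nonneg_left h2 (by positivity)) h4
            (sq_nonneg _) (by positivity)
      _ = (d:ℝ)^3 * H.trace * (∑ i, w i ^ 2) := by ring
  have hAv_cont : Continuous fun w : Fin d → ℝ => A *ᵥ w := by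
    apply continuous_pi
    intro k
    have hk : (fun w : Fin d → ℝ => (A *ᵥ w) k) = fun w => ∑ j, A k j * w j := rfl
    rw [hk]
    exact continuous_finset_sum _ fun j _ => continuous_const.mul (continuous_apply j)
  have hρ_cont : Continuous ρ := by
    have h1 : Continuous fun w : Fin d → ℝ => f (y - A *ᵥ w) :=
      hf.continuous.comp (continuous_const.sub hAv_cont)
    have h2 : Continuous fun w : Fin d → ℝ => F (A *ᵥ w) := F.continuous.comp hAv_cont
    have h3 : Continuous fun w : Fin d → ℝ => Q (A *ᵥ w) := by
      have hq : (fun w : Fin d → ℝ => Q (A *ᵥ w))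
          = fun w => ∑ i, ∑ j, (A *ᵥ w) i * (A *ᵥ w) j * Hm i j := rfl
      rw [hq]
      refine continuous_finset_sum _ fun i _ => continuous_finset_sum _ fun j _ => ?_
      exact (((continuous_apply i).comp hAv_cont).mul
        ((continuous_apply j).comp hAv_cont)).mul continuous_const
    rw [hρdef]
    exact ((h1.sub continuous_const).add h2).sub (continuous_const.mul h3)
  have hKρ_int : Integrable fun w => K w * ρ w := by
    refine Integrable.mono' (hg_int.const_mul ((d:ℝ)^5 * C * H.trace))
      (hK_int.aestronglyMeasurable.mul hρ_cont.aestronglyMeasurable)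
      (ae_of_all _ fun w => ?_)
    rw [Real.norm_eq_abs, abs_mul, abs_of_nonneg (hK_nonneg w)]
    calc K w * |ρ w| ≤ K w * ((d:ℝ)^2 * C * ‖A *ᵥ w‖^2) :=
          mul_le_mul_of_nonneg_left (hρ_glob w) (hK_nonneg w)
      _ ≤ K w * ((d:ℝ)^2 * C * ((d:ℝ)^3 * H.trace * (∑ i, w i ^ 2))) :=
          mul_le_mul_of_nonneg_left
            (mul_le_mul_of_nonneg_left (hv_sq w) (by positivity)) (hK_nonneg w)
      _ = (d:ℝ)^5 * C * H.trace * g w := by simp only [hgdef]; ring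
  -- integral identity
  have heq2 : (fun w => K w * F (A *ᵥ w))
      = fun w => ∑ k, ∑ j, (F (Pi.single k 1) * A k j) * (w j * K w) := by
    funext w
    rw [clm_apply_eq_sum F (A *ᵥ w), Finset.mul_sum]
    refine Finset.sum_congr rfl fun k _ => ?_
    have hk : (A *ᵥ w) k = ∑ j, A k j * w j := rfl
    rw [hk, Finset.sum_mul, Finset.mul_sum]
    exact Finset.sum_congr rfl fun j _ => by ring
  have Int₂ : Integrable fun w => K w * F (A *ᵥ w) := by
    rw [heq2]
    exact integrable_finset_sum _ fun k _ =>
      integrable_finset_sum _ fun j _ => (hK_mean_int j).const_mul _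
  have hint2 : ∫ w, K w * F (A *ᵥ w) = 0 := by
    rw [heq2, integral_finset_sum _ (fun k _ =>
      integrable_finset_sum _ fun j _ => (hK_mean_int j).const_mul _)]
    apply Finset.sum_eq_zero
    intro k _
    rw [integral_finset_sum _ (fun j _ => (hK_mean_int j).const_mul _)]
    apply Finset.sum_eq_zero
    intro j _
    rw [integral_const_mul, hK_mean j, mul_zero]
  have heq3 : (fun w => K w * Q (A *ᵥ w))
      = fun w => ∑ i, ∑ j, ∑ k, ∑ l, (Hm i j * (A i k * A j l)) * (w k * w l * K w) := by
    funext w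
    have hq : Q (A *ᵥ w) = ∑ i, ∑ j, (A *ᵥ w) i * (A *ᵥ w) j * Hm i j := rfl
    rw [hq, Finset.mul_sum]
    refine Finset.sum_congr rfl fun i _ => ?_
    rw [Finset.mul_sum]
    refine Finset.sum_congr rfl fun j _ => ?_
    have hi : (A *ᵥ w) i = ∑ k, A i k * w k := rfl
    have hj : (A *ᵥ w) j = ∑ l, A j l * w l := rfl
    rw [hi, hj, Finset.sum_mul_sum, Finset.sum_mul, Finset.mul_sum]
    refine Finset.sum_congr rfl fun k _ => ?_
    rw [Finset.sum_mul, Finset.mul_sum]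
    exact Finset.sum_congr rfl fun l _ => by ring
  have Int₃ : Integrable fun w => K w * Q (A *ᵥ w) := by
    rw [heq3]
    exact integrable_finset_sum _ fun i _ => integrable_finset_sum _ fun j _ =>
      integrable_finset_sum _ fun k _ => integrable_finset_sum _ fun l _ =>
        (hK_mom_int k l).const_mul _
  have hH_entry : ∀ i j, H i j = ∑ k, A i k * A j k := by
    intro i j
    rw [← hAA, Matrix.mul_apply]
    exact Finset.sum_congr rfl fun k _ => by rw [psd_symm hA j k]
  have hint3 : ∫ w, K w * Q (A *ᵥ w) = m₂ * (H * Hm).trace := by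
    rw [heq3, integral_finset_sum _ (fun i _ => integrable_finset_sum _ fun j _ =>
      integrable_finset_sum _ fun k _ => integrable_finset_sum _ fun l _ =>
        (hK_mom_int k l).const_mul _)]
    have Ei : ∀ i j, (∫ w, ∑ k, ∑ l, (Hm i j * (A i k * A j l)) * (w k * w l * K w))
        = Hm i j * H i j * m₂ := by
      intro i j
      rw [integral_finset_sum _ (fun k _ => integrable_finset_sum _ fun l _ =>
        (hK_mom_int k l).const_mul _)]
      have hk : ∀ k, (∫ w, ∑ l, (Hm i j * (A i k * A j l)) * (w k * w l * K w))
          = Hm i j * (A i k * A j k) * m₂ := by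
        intro k
        rw [integral_finset_sum _ (fun l _ => (hK_mom_int k l).const_mul _)]
        have hl : ∀ l, (∫ w, (Hm i j * (A i k * A j l)) * (w k * w l * K w))
            = if k = l then (Hm i j * (A i k * A j l)) * m₂ else 0 := by
          intro l
          rw [integral_const_mul, hK_mom k l]
          split_ifs with h
          · rfl
          · rw [mul_zero]
        simp_rw [hl]
        rw [Finset.sum_ite_eq Finset.univ k (fun l => (Hm i j * (A i k * A j l)) * m₂)]
        simp
      simp_rw [hk]
      rw [hH_entry i j, Finset.mul_sum, Finset.sum_mul]
      try exact Finset.sum_congr rfl fun k _ => by ring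
    calc (∑ i, ∫ w, ∑ j, ∑ k, ∑ l, (Hm i j * (A i k * A j l)) * (w k * w l * K w))
        = ∑ i, ∑ j, Hm i j * H i j * m₂ := by
          refine Finset.sum_congr rfl fun i _ => ?_
          rw [integral_finset_sum _ (fun j _ => integrable_finset_sum _ fun k _ =>
            integrable_finset_sum _ fun l _ => (hK_mom_int k l).const_mul _)]
          exact Finset.sum_congr rfl fun j _ => Ei i j
      _ = m₂ * (H * Hm).trace := by
          rw [Matrix.trace, Finset.mul_sum]
          refine Finset.sum_congr rfl fun i _ => ?_
          rw [Matrix.diag_apply, Matrix.mul_apply, Finset.mul_sum]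
          refine Finset.sum_congr rfl fun j _ => ?_
          have hsymm : Hm j i = Hm i j := by
            rw [hHmdef]
            exact hessian_symm hf y j i
          rw [hsymm]
          ring
  have Int₁ : Integrable fun w : Fin d → ℝ => K w * f y := hK_int.mul_const _
  have hint1 : ∫ w : Fin d → ℝ, K w * f y = f y := by
    rw [integral_mul_const, hK_prob, one_mul]
  have hsplit : (∫ w, K w * f (y - A *ᵥ w))
      = f y + (1/2) * m₂ * (H * Hm).trace + ∫ w, K w * ρ w := by
    have hfun : (fun w => K w * f (y - A *ᵥ w))
        = fun w => (K w * f y - K w * F (A *ᵥ w))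
          + ((1/2) * (K w * Q (A *ᵥ w)) + K w * ρ w) := by
      funext w
      simp only [hρdef]
      ring
    have IntA : Integrable fun w => K w * f y - K w * F (A *ᵥ w) := Int₁.sub Int₂
    have IntC : Integrable fun w => (1/2) * (K w * Q (A *ᵥ w)) := Int₃.const_mul ((1:ℝ)/2)
    have IntB : Integrable fun w => (1/2) * (K w * Q (A *ᵥ w)) + K w * ρ w :=
      IntC.add hKρ_int
    rw [hfun, integral_add IntA IntB, integral_sub Int₁ Int₂,
      integral_add IntC hKρ_int, integral_const_mul, hint1, hint2, hint3]
    ring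
  have hgoal_eq : (∫ w, K w * f (y - A *ᵥ w)) - f y - 1 / 2 * m₂ * (H * Hm).trace
      = ∫ w, K w * ρ w := by
    rw [hsplit]; ring
  rw [hgoal_eq]
  -- final bound
  set S := {w : Fin d → ℝ | (N:ℝ) < ‖w‖} with hSdef
  have hbound : ∀ w, ‖K w * ρ w‖
      ≤ (1/2) * (d:ℝ)^5 * ε * H.trace * g w
        + ((d:ℝ)^5 * C * H.trace) * S.indicator g w := by
    intro w
    rw [Real.norm_eq_abs, abs_mul, abs_of_nonneg (hK_nonneg w)]
    rcases le_or_gt ‖w‖ (N:ℝ) with hw | hw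
    · have hind : S.indicator g w = 0 :=
        Set.indicator_of_notMem (by simp only [hSdef, Set.mem_setOf_eq, not_lt]; exact hw) _
      rw [hind, mul_zero, add_zero]
      have hAvδ : ‖A *ᵥ w‖ ≤ δ := by
        have h1 : ‖A *ᵥ w‖ ≤ (d:ℝ) * A.trace * ‖w‖ := mulVec_norm_le hA w
        have h2 : A.trace^2 ≤ (d:ℝ) * H.trace := by
          have := psd_trace_sq_le hA
          rwa [hAA] at this
        have h3 : ‖A *ᵥ w‖^2 ≤ (d:ℝ)^3 * H.trace * (N:ℝ)^2 := by
          calc ‖A *ᵥ w‖^2 ≤ ((d:ℝ) * A.trace * ‖w‖)^2 :=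
                pow_le_pow_left₀ (norm_nonneg _) h1 2
            _ = (d:ℝ)^2 * A.trace^2 * ‖w‖^2 := by ring
            _ ≤ (d:ℝ)^2 * ((d:ℝ) * H.trace) * (N:ℝ)^2 := by
                apply mul_le_mul (mul_le_mul_of_nonneg_left h2 (by positivity))
                  (pow_le_pow_left₀ (norm_nonneg w) hw 2) (sq_nonneg _) (by positivity)
            _ = (d:ℝ)^3 * H.trace * (N:ℝ)^2 := by ring
        have h4 : (d:ℝ)^3 * H.trace * (N:ℝ)^2 ≤ δ^2 := by
          have hD : (0:ℝ) ≤ (d:ℝ)^3 * (N:ℝ)^2 := by positivity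
          have key := mul_nonneg hD (sub_nonneg.2 htrβ.le)
          have h7 : (d:ℝ)^3 * (N:ℝ)^2 ≤ (d:ℝ)^3 * (N:ℝ)^2 + 1 := by linarith
          have h6 : (d:ℝ)^3 * (N:ℝ)^2 * β ≤ δ^2 := by
            rw [hβdef]
            calc (d:ℝ)^3 * (N:ℝ)^2 * (δ^2 / ((d:ℝ)^3 * (N:ℝ)^2 + 1))
                ≤ ((d:ℝ)^3 * (N:ℝ)^2 + 1) * (δ^2 / ((d:ℝ)^3 * (N:ℝ)^2 + 1)) :=
                  mul_le_mul_of_nonneg_right h7 (by positivity)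
              _ = δ^2 := by field_simp
          nlinarith [key, h6]
        nlinarith [norm_nonneg (A *ᵥ w), hδpos, h3, h4]
      calc K w * |ρ w| ≤ K w * ((1/2) * (d:ℝ)^2 * ε * ‖A *ᵥ w‖^2) :=
            mul_le_mul_of_nonneg_left (hρ_loc w hAvδ) (hK_nonneg w)
        _ ≤ K w * ((1/2) * (d:ℝ)^2 * ε * ((d:ℝ)^3 * H.trace * (∑ i, w i ^ 2))) := by
            apply mul_le_mul_of_nonneg_left _ (hK_nonneg w)
            apply mul_le_mul_of_nonneg_left (hv_sq w) (by positivity)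
        _ = (1/2) * (d:ℝ)^5 * ε * H.trace * g w := by simp only [hgdef]; ring
    · have hind : S.indicator g w = g w :=
        Set.indicator_of_mem (by simp only [hSdef, Set.mem_setOf_eq]; exact hw) _
      rw [hind]
      have hfirst : 0 ≤ (1/2) * (d:ℝ)^5 * ε * H.trace * g w :=
        mul_nonneg (mul_nonneg (mul_nonneg (mul_nonneg (by norm_num)
          (by positivity)) hε.le) htrH0) (hg_nonneg w)
      have h8 : K w * |ρ w| ≤ (d:ℝ)^5 * C * H.trace * g w := by
        calc K w * |ρ w| ≤ K w * ((d:ℝ)^2 * C * ‖A *ᵥ w‖^2) :=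
              mul_le_mul_of_nonneg_left (hρ_glob w) (hK_nonneg w)
          _ ≤ K w * ((d:ℝ)^2 * C * ((d:ℝ)^3 * H.trace * (∑ i, w i ^ 2))) :=
              mul_le_mul_of_nonneg_left
                (mul_le_mul_of_nonneg_left (hv_sq w) (by positivity)) (hK_nonneg w)
          _ = (d:ℝ)^5 * C * H.trace * g w := by simp only [hgdef]; ring
      linarith [h8, hfirst]
  have hb_int : Integrable fun w =>
      (1/2) * (d:ℝ)^5 * ε * H.trace * g w
        + ((d:ℝ)^5 * C * H.trace) * S.indicator g w :=
    (hg_int.const_mul _).add ((hg_int.indicator (hSmeas N)).const_mul _)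
  have hnorm : ‖∫ w, K w * ρ w‖
      ≤ ∫ w, ((1/2) * (d:ℝ)^5 * ε * H.trace * g w
        + ((d:ℝ)^5 * C * H.trace) * S.indicator g w) :=
    norm_integral_le_of_norm_le hb_int (ae_of_all _ hbound)
  have hInt_val : (∫ w, ((1/2) * (d:ℝ)^5 * ε * H.trace * g w
        + ((d:ℝ)^5 * C * H.trace) * S.indicator g w))
      = (1/2) * (d:ℝ)^5 * ε * H.trace * M₂ + ((d:ℝ)^5 * C * H.trace) * T := by
    rw [integral_add (hg_int.const_mul _) ((hg_int.indicator (hSmeas N)).const_mul _),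
      integral_const_mul, integral_const_mul, integral_indicator (hSmeas N)]
  rw [hInt_val] at hnorm
  have hcoef : (1/2) * (d:ℝ)^5 * ε * M₂ + (d:ℝ)^5 * C * T ≤ c := by
    have hd5 : (0:ℝ) ≤ (d:ℝ)^5 := by positivity
    have h1 : (d:ℝ)^5 * ε * M₂ ≤ c := by
      have h2 : (d:ℝ)^5 * M₂ ≤ (d:ℝ)^5 * (M₂ + 1) + 1 := by nlinarith
      calc (d:ℝ)^5 * ε * M₂ = ((d:ℝ)^5 * M₂) * ε := by ring
        _ ≤ ((d:ℝ)^5 * (M₂ + 1) + 1) * ε := mul_le_mul_of_nonneg_right h2 hε.le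
        _ = c := by
            rw [hεdef]
            field_simp
    linarith [hN, h1]
  have hfinal : (1/2) * (d:ℝ)^5 * ε * H.trace * M₂ + ((d:ℝ)^5 * C * H.trace) * T
      ≤ c * H.trace := by
    nlinarith [mul_le_mul_of_nonneg_right hcoef htrH0]
  rw [Real.norm_eq_abs H.trace, abs_of_nonneg htrH0]
  linarith [hnorm, hfinal]
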